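/- arXiv:2602.22275 — 2 statements merged into one kernel-verified Lean document; each statement's English description precedes it below -/
import Mathlib

section
/- Let L > 0 and let C : ℝ → EuclideanSpace ℝ (Fin 3) be four times continuously differentiable (ContDiff ℝ 4) with ‖deriv C s‖ = 1 for every s ∈ [0, L]. Then there exists a constant K > 0 such that for every n ≥ 1, taking the equally spaced arclength samples sᵢ = i·L/n (0 ≤ i ≤ n), one has 0 ≤ L − Σ_{i=0}^{n−1} ‖C(s_{i+1}) − C(s_i)‖ ≤ K·L³/n², i.e. the inscribed polygon length converges to the curve length at rate O(h²) with h = L/n. -/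
open RealInnerProductSpace Set Finset

/-- The inscribed polygon through equally spaced arclength samples `sᵢ = i·L/n`
underestimates the length `L` of an arclength-parametrized `C⁴` curve by at most
`K·L³/n²`. -/
theorem inscribed_polygon_length_second_order
    (L : ℝ) (hL : 0 < L) (C : ℝ → EuclideanSpace ℝ (Fin 3))
    (hC : ContDiff ℝ 4 C)
    (harc : ∀ s ∈ Set.Icc (0 : ℝ) L, ‖deriv C s‖ = 1) :
    ∃ K > (0 : ℝ), ∀ n : ℕ, 1 ≤ n →
      0 ≤ L - ∑ i ∈ Finset.range n,
          ‖C (((i : ℝ) + 1) * L / n) - C ((i : ℝ) * L / n)‖ ∧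
      L - ∑ i ∈ Finset.range n,
          ‖C (((i : ℝ) + 1) * L / n) - C ((i : ℝ) * L / n)‖ ≤ K * L ^ 3 / n ^ 2 := by
  set D := deriv C with hDdef
  have hCdiff : Differentiable ℝ C := hC.differentiable (by norm_num)
  have hDcd : ContDiff ℝ 1 D := by
    have h2 : ContDiff ℝ (1 + 1) C := hC.of_le (by norm_num)
    exact (contDiff_succ_iff_deriv.mp h2).2.2
  have hDdiff : Differentiable ℝ D := hDcd.differentiable one_ne_zero
  have hD'cont : Continuous (deriv D) := by
    have h1 : ContDiff ℝ (0 + 1) D := by simpa using hDcd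
    exact ((contDiff_succ_iff_deriv.mp h1).2.2).continuous
  obtain ⟨M, hM⟩ := (isCompact_Icc : IsCompact (Set.Icc (0:ℝ) L)).exists_bound_of_continuousOn
    hD'cont.continuousOn
  have hM0 : 0 ≤ M := le_trans (norm_nonneg _) (hM 0 ⟨le_rfl, hL.le⟩)
  -- Lipschitz estimate for D on [0, L]
  have hlip : ∀ a ∈ Set.Icc (0:ℝ) L, ∀ t ∈ Set.Icc (0:ℝ) L, ‖D t - D a‖ ≤ M * ‖t - a‖ := by
    intro a ha t ht
    exact Convex.norm_image_sub_le_of_norm_hasDerivWithin_le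
      (fun x _ => (hDdiff x).hasDerivAt.hasDerivWithinAt) hM (convex_Icc 0 L) ha ht
  -- inner product lower bound
  have hinner : ∀ a ∈ Set.Icc (0:ℝ) L, ∀ t ∈ Set.Icc (0:ℝ) L,
      1 - M ^ 2 * (t - a) ^ 2 / 2 ≤ ⟪D t, D a⟫ := by
    intro a ha t ht
    have h1 : ‖D t‖ = 1 := harc t ht
    have h2 : ‖D a‖ = 1 := harc a ha
    have hsq : ‖D t - D a‖ ^ 2 = 2 - 2 * ⟪D t, D a⟫ := by
      rw [norm_sub_sq_real, h1, h2]; ring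
    have hb : ‖D t - D a‖ ^ 2 ≤ M ^ 2 * (t - a) ^ 2 := by
      have h3 : ‖D t - D a‖ ^ 2 ≤ (M * ‖t - a‖) ^ 2 :=
        pow_le_pow_left₀ (norm_nonneg _) (hlip a ha t ht) 2
      calc ‖D t - D a‖ ^ 2 ≤ (M * ‖t - a‖) ^ 2 := h3
        _ = M ^ 2 * (t - a) ^ 2 := by rw [Real.norm_eq_abs, mul_pow, sq_abs]
    linarith
  -- per-segment estimate
  have hseg : ∀ a b : ℝ, a ∈ Set.Icc (0:ℝ) L → b ∈ Set.Icc (0:ℝ) L → a ≤ b →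
      (b - a) - M ^ 2 * (b - a) ^ 3 / 6 ≤ ‖C b - C a‖ ∧ ‖C b - C a‖ ≤ b - a := by
    intro a b ha hb hab
    constructor
    · -- lower bound via inner product with D a
      set ψ : ℝ → ℝ := fun t => ⟪C t - C a, D a⟫ - ((t - a) - M ^ 2 * (t - a) ^ 3 / 6) with hψ
      have hasψ : ∀ t, HasDerivAt ψ (⟪D t, D a⟫ - (1 - M ^ 2 * (t - a) ^ 2 / 2)) t := by
        intro t
        have h1 : HasDerivAt (fun t => C t - C a) (D t) t :=
          ((hCdiff t).hasDerivAt).sub_const _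
        have h2 : HasDerivAt (fun t => ⟪C t - C a, D a⟫) (⟪D t, D a⟫) t := by
          have := HasDerivAt.inner ℝ h1 (hasDerivAt_const t (D a))
          simpa using this
        have hsub : HasDerivAt (fun t : ℝ => t - a) 1 t := (hasDerivAt_id t).sub_const a
        have hcube : HasDerivAt (fun t : ℝ => (t - a) ^ 3) ((3 : ℕ) * (t - a) ^ (3 - 1) * 1) t :=
          hsub.pow 3
        have h3' := hsub.sub ((hcube.const_mul (M ^ 2)).div_const 6)
        have h3 : HasDerivAt (fun t : ℝ => (t - a) - M ^ 2 * (t - a) ^ 3 / 6)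
            (1 - M ^ 2 * (t - a) ^ 2 / 2) t := by
          have e : (1 - M ^ 2 * (t - a) ^ 2 / 2) = 1 - M ^ 2 * ((3 : ℕ) * (t - a) ^ (3 - 1) * 1) / 6 := by
            push_cast; ring
          rw [e]; exact h3'
        exact h2.sub h3
      have hψdiff : Differentiable ℝ ψ := fun t => (hasψ t).differentiableAt
      have mono : MonotoneOn ψ (Set.Icc a b) := by
        apply monotoneOn_of_deriv_nonneg (convex_Icc a b) hψdiff.continuous.continuousOn
          hψdiff.differentiableOn
        intro t ht
        rw [interior_Icc] at ht
        rw [(hasψ t).deriv]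
        have htI : t ∈ Set.Icc (0:ℝ) L := ⟨le_trans ha.1 ht.1.le, le_trans ht.2.le hb.2⟩
        have := hinner a ha t htI
        linarith
      have hmono := mono ⟨le_rfl, hab⟩ ⟨hab, le_rfl⟩ hab
      have hψa : ψ a = 0 := by simp [hψ]
      have hψb : 0 ≤ ψ b := by rw [← hψa]; exact hmono
      have hinb : ⟪C b - C a, D a⟫ ≤ ‖C b - C a‖ := by
        calc ⟪C b - C a, D a⟫ ≤ ‖C b - C a‖ * ‖D a‖ := real_inner_le_norm _ _
          _ = ‖C b - C a‖ := by rw [harc a ha, mul_one]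
      simp only [hψ] at hψb
      linarith
    · -- upper bound: chord ≤ arc
      have := Convex.norm_image_sub_le_of_norm_hasDerivWithin_le
        (f := C) (f' := D) (fun x _ => (hCdiff x).hasDerivAt.hasDerivWithinAt)
        (fun x hx => (harc x hx).le) (convex_Icc 0 L) ha hb
      rwa [one_mul, Real.norm_eq_abs, abs_of_nonneg (sub_nonneg.mpr hab)] at this
  refine ⟨M ^ 2 / 6 + 1, by positivity, ?_⟩
  intro n hn
  have hn0 : (0:ℝ) < n := by exact_mod_cast hn
  have hpt : ∀ i : ℕ, i ≤ n → (i : ℝ) * L / n ∈ Set.Icc (0:ℝ) L := by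
    intro i hi
    constructor
    · positivity
    · rw [div_le_iff₀ hn0]
      have : (i : ℝ) ≤ n := by exact_mod_cast hi
      nlinarith
  have hsegi : ∀ i ∈ Finset.range n,
      0 ≤ L / n - ‖C (((i : ℝ) + 1) * L / n) - C ((i : ℝ) * L / n)‖ ∧
      L / n - ‖C (((i : ℝ) + 1) * L / n) - C ((i : ℝ) * L / n)‖ ≤ M ^ 2 * (L / n) ^ 3 / 6 := by
    intro i hi
    have hi' : i < n := Finset.mem_range.mp hi
    have ha := hpt i hi'.le
    have hb' : (((i:ℝ) + 1) * L / n) = ((i + 1 : ℕ) : ℝ) * L / n := by push_cast; ring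
    have hb : ((i:ℝ) + 1) * L / n ∈ Set.Icc (0:ℝ) L := by rw [hb']; exact hpt (i+1) hi'
    have hab : (i : ℝ) * L / n ≤ ((i:ℝ) + 1) * L / n := by
      gcongr <;> linarith
    have hd : ((i:ℝ) + 1) * L / n - (i : ℝ) * L / n = L / n := by ring
    obtain ⟨h1, h2⟩ := hseg _ _ ha hb hab
    rw [hd] at h1 h2
    exact ⟨by linarith, by linarith⟩
  have hsum : L - ∑ i ∈ Finset.range n, ‖C (((i : ℝ) + 1) * L / n) - C ((i : ℝ) * L / n)‖
      = ∑ i ∈ Finset.range n, (L / n - ‖C (((i : ℝ) + 1) * L / n) - C ((i : ℝ) * L / n)‖) := by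
    rw [Finset.sum_sub_distrib, Finset.sum_const, Finset.card_range, nsmul_eq_mul,
      mul_div_cancel₀ _ (ne_of_gt hn0)]
  rw [hsum]
  constructor
  · exact Finset.sum_nonneg fun i hi => (hsegi i hi).1
  · calc ∑ i ∈ Finset.range n, (L / n - ‖C (((i : ℝ) + 1) * L / n) - C ((i : ℝ) * L / n)‖)
        ≤ ∑ _i ∈ Finset.range n, M ^ 2 * (L / n) ^ 3 / 6 :=
          Finset.sum_le_sum fun i hi => (hsegi i hi).2
      _ = n * (M ^ 2 * (L / n) ^ 3 / 6) := by
          rw [Finset.sum_const, Finset.card_range, nsmul_eq_mul]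
      _ = M ^ 2 / 6 * L ^ 3 / (n:ℝ) ^ 2 := by
          rw [div_pow]; field_simp
      _ ≤ (M ^ 2 / 6 + 1) * L ^ 3 / n ^ 2 := by
          gcongr
          linarith
end

section
/- Let h > 0 and let f : ℝ → ℝ be four times continuously differentiable (ContDiff ℝ 4) on an open set containing [−h/2, h/2], and suppose ‖f⁗(t)‖ ≤ M for all t ∈ [−h/2, h/2], where f⁗ is the fourth derivative. Then | ∫_{−h/2}^{h/2} f(t) dt − f(0)·h − f''(0)·h³/24 | ≤ M·h⁵/1920. In particular, the integral of f over the symmetric interval equals f(0)h + f''(0)h³/24 + O(h⁵). -/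
open Set intervalIntegral

private lemma iDW_open_eq {f : ℝ → ℝ} {U : Set ℝ} (hU : IsOpen U) {m : ℕ} {x : ℝ}
    (hx : x ∈ U) : iteratedDerivWithin m f U x = iteratedDeriv m f x := by
  rw [iteratedDerivWithin_eq_iteratedFDerivWithin, iteratedDeriv_eq_iteratedFDeriv,
    iteratedFDerivWithin_of_isOpen m hU hx]

private lemma diffAt_iter {f : ℝ → ℝ} {U : Set ℝ} (hU : IsOpen U)
    (hf : ContDiffOn ℝ 4 f U) {m : ℕ} (hm : m < 4) {x : ℝ} (hx : x ∈ U) :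
    DifferentiableAt ℝ (iteratedDeriv m f) x := by
  have h1 : DifferentiableOn ℝ (iteratedDerivWithin m f U) U :=
    hf.differentiableOn_iteratedDerivWithin (by exact_mod_cast hm) hU.uniqueDiffOn
  have h2 := (h1 x hx).differentiableAt (hU.mem_nhds hx)
  refine h2.congr_of_eventuallyEq ?_
  filter_upwards [hU.mem_nhds hx] with y hy
  exact (iDW_open_eq hU hy).symm

private lemma iDW_eq_iD {f : ℝ → ℝ} {U : Set ℝ} (hU : IsOpen U)
    (hf : ContDiffOn ℝ 4 f U) {s : Set ℝ} (hs : UniqueDiffOn ℝ s) (hsub : s ⊆ U) :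
    ∀ m, m ≤ 4 → ∀ x ∈ s, iteratedDerivWithin m f s x = iteratedDeriv m f x := by
  intro m
  induction m with
  | zero => intro _ x hx; simp
  | succ k ih =>
    intro hm x hx
    rw [iteratedDerivWithin_succ]
    have e1 : derivWithin (iteratedDerivWithin k f s) s x
        = derivWithin (iteratedDeriv k f) s x :=
      derivWithin_congr (fun y hy => ih (Nat.le_of_succ_le hm) y hy)
        (ih (Nat.le_of_succ_le hm) x hx)
    rw [e1, (diffAt_iter hU hf hm (hsub hx)).derivWithin (hs x hx), ← iteratedDeriv_succ]

private lemma taylor4_bound {f : ℝ → ℝ} {U : Set ℝ} (hU : IsOpen U)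
    (hf : ContDiffOn ℝ 4 f U) {t M : ℝ} (ht : 0 < t) (hsub : Set.Icc 0 t ⊆ U)
    (hM : ∀ y ∈ Set.Icc 0 t, |iteratedDeriv 4 f y| ≤ M) :
    |f t - (f 0 + iteratedDeriv 1 f 0 * t + iteratedDeriv 2 f 0 / 2 * t ^ 2
        + iteratedDeriv 3 f 0 / 6 * t ^ 3)| ≤ M * t ^ 4 / 24 := by
  have hs : UniqueDiffOn ℝ (Icc 0 t) := uniqueDiffOn_Icc ht
  have hEq := iDW_eq_iD hU hf hs hsub
  have hf' : DifferentiableOn ℝ (iteratedDerivWithin 3 f (Icc 0 t)) (Ioo 0 t) := by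
    intro x hx
    have hxI : x ∈ Icc 0 t := Ioo_subset_Icc_self hx
    exact ((diffAt_iter hU hf (by norm_num) (hsub hxI)).differentiableWithinAt).congr
      (fun y hy => hEq 3 (by norm_num) y (Ioo_subset_Icc_self hy))
      (hEq 3 (by norm_num) x hxI)
  obtain ⟨x', hx', hL⟩ := taylor_mean_remainder_lagrange (n := 3) ht.ne
    (by rw [uIcc_of_le ht.le]; exact (hf.mono hsub).of_le (by norm_num))
    (by rw [uIcc_of_le ht.le, uIoo_of_le ht.le]; exact hf')
  rw [uIcc_of_le ht.le] at hL
  rw [uIoo_of_le ht.le] at hx'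
  have h0 : (0:ℝ) ∈ Icc 0 t := left_mem_Icc.2 ht.le
  have hT : taylorWithinEval f 3 (Icc 0 t) 0 t
      = f 0 + iteratedDeriv 1 f 0 * t + iteratedDeriv 2 f 0 / 2 * t ^ 2
        + iteratedDeriv 3 f 0 / 6 * t ^ 3 := by
    rw [taylor_within_apply]
    rw [Finset.sum_range_succ, Finset.sum_range_succ, Finset.sum_range_succ,
      Finset.sum_range_one]
    rw [hEq 0 (by norm_num) 0 h0, hEq 1 (by norm_num) 0 h0, hEq 2 (by norm_num) 0 h0,
      hEq 3 (by norm_num) 0 h0]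
    simp [Nat.factorial]
    ring
  rw [← hT]
  rw [hL, hEq 4 le_rfl x' (Ioo_subset_Icc_self hx')]
  have hb := hM x' (Ioo_subset_Icc_self hx')
  have ht4 : (0:ℝ) ≤ t ^ 4 := by positivity
  have hb' : |iteratedDeriv 4 f x'| * t ^ 4 / 24 ≤ M * t ^ 4 / 24 := by gcongr
  refine le_trans (le_of_eq ?_) hb'
  rw [abs_div, abs_mul]
  norm_num [Nat.factorial, abs_of_nonneg ht4]

/-- Midpoint-type quadrature over a symmetric interval:
`∫_{−h/2}^{h/2} f = f(0)·h + f''(0)·h³/24 + O(h⁵)`, with explicit error bound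
`M·h⁵/1920` when the fourth derivative is bounded by `M` on the interval. -/
theorem symmetric_integral_expansion
    (h : ℝ) (hh : 0 < h) (f : ℝ → ℝ) (U : Set ℝ) (hU : IsOpen U)
    (hsub : Set.Icc (-(h / 2)) (h / 2) ⊆ U) (hf : ContDiffOn ℝ 4 f U)
    (M : ℝ) (hM : ∀ t ∈ Set.Icc (-(h / 2)) (h / 2), ‖iteratedDeriv 4 f t‖ ≤ M) :
    |(∫ t in (-(h / 2))..(h / 2), f t) - f 0 * h - iteratedDeriv 2 f 0 * h ^ 3 / 24|
      ≤ M * h ^ 5 / 1920 := by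
  have hab : -(h / 2) ≤ h / 2 := by linarith
  set T : ℝ → ℝ := fun t => f 0 + iteratedDeriv 1 f 0 * t + iteratedDeriv 2 f 0 / 2 * t ^ 2
      + iteratedDeriv 3 f 0 / 6 * t ^ 3 with hTdef
  have hM' : ∀ t ∈ Set.Icc (-(h / 2)) (h / 2), |iteratedDeriv 4 f t| ≤ M := by
    simpa [Real.norm_eq_abs] using hM
  have hM0 : 0 ≤ M := (abs_nonneg _).trans (hM' 0 ⟨by linarith, by linarith⟩)
  -- pointwise bound
  have key : ∀ t ∈ Set.Icc (-(h / 2)) (h / 2), |f t - T t| ≤ M / 24 * t ^ 4 := by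
    intro t htI
    rcases lt_trichotomy t 0 with htn | htz | htp
    · -- negative side: use g x = f (-x)
      set U' : Set ℝ := Neg.neg ⁻¹' U with hU'def
      have hU' : IsOpen U' := hU.preimage continuous_neg
      have hg : ContDiffOn ℝ 4 (fun x => f (-x)) U' :=
        ContDiffOn.comp hf (contDiff_neg.contDiffOn) (fun x hx => hx)
      have hsub' : Set.Icc 0 (-t) ⊆ U' := by
        intro x hx
        have : -x ∈ Set.Icc (-(h / 2)) (h / 2) := by
          constructor
          · have := htI.1; have := hx.2; simp only [mem_Icc] at *; linarith
          · have := hx.1; linarith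
        exact hsub this
      have hMg : ∀ y ∈ Set.Icc 0 (-t), |iteratedDeriv 4 (fun x => f (-x)) y| ≤ M := by
        intro y hy
        rw [iteratedDeriv_comp_neg]
        have : -y ∈ Set.Icc (-(h / 2)) (h / 2) := by
          constructor
          · have := htI.1; have := hy.2; linarith
          · have := hy.1; linarith
        simpa [smul_eq_mul, show ((-1:ℝ)) ^ 4 = 1 by norm_num] using hM' (-y) this
      have hb := taylor4_bound hU' hg (by linarith : (0:ℝ) < -t) hsub' hMg
      have e1 : (fun x => f (-x)) (-t)
          - ((fun x => f (-x)) 0 + iteratedDeriv 1 (fun x => f (-x)) 0 * (-t)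
            + iteratedDeriv 2 (fun x => f (-x)) 0 / 2 * (-t) ^ 2
            + iteratedDeriv 3 (fun x => f (-x)) 0 / 6 * (-t) ^ 3)
          = f t - T t := by
        simp only [iteratedDeriv_comp_neg, neg_zero, neg_neg, smul_eq_mul, hTdef]
        ring
      rw [e1] at hb
      calc |f t - T t| ≤ M * (-t) ^ 4 / 24 := hb
        _ = M / 24 * t ^ 4 := by ring
    · simp [htz, hTdef]
    · have hsub2 : Set.Icc 0 t ⊆ U := by
        refine subset_trans ?_ hsub
        intro x hx
        exact ⟨by have := hx.1; linarith, le_trans hx.2 htI.2⟩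
      have hMt : ∀ y ∈ Set.Icc 0 t, |iteratedDeriv 4 f y| ≤ M := by
        intro y hy
        exact hM' y ⟨by have := hy.1; linarith, le_trans hy.2 htI.2⟩
      have hb := taylor4_bound hU hf htp hsub2 hMt
      calc |f t - T t| ≤ M * t ^ 4 / 24 := hb
        _ = M / 24 * t ^ 4 := by ring
  -- integrability
  have hfi : IntervalIntegrable f MeasureTheory.volume (-(h / 2)) (h / 2) := by
    apply ContinuousOn.intervalIntegrable
    rw [Set.uIcc_of_le hab]
    exact (hf.continuousOn).mono hsub
  have hTi : IntervalIntegrable T MeasureTheory.volume (-(h / 2)) (h / 2) :=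
    (Continuous.intervalIntegrable (by fun_prop) _ _)
  -- integral of T
  have hTint : (∫ t in (-(h / 2))..(h / 2), T t)
      = f 0 * h + iteratedDeriv 2 f 0 * h ^ 3 / 24 := by
    have i0 : IntervalIntegrable (fun _ : ℝ => f 0) MeasureTheory.volume (-(h / 2)) (h / 2) :=
      intervalIntegrable_const
    have i1 : IntervalIntegrable (fun t : ℝ => iteratedDeriv 1 f 0 * t)
        MeasureTheory.volume (-(h / 2)) (h / 2) :=
      (Continuous.intervalIntegrable (by fun_prop) _ _)
    have i2 : IntervalIntegrable (fun t : ℝ => iteratedDeriv 2 f 0 / 2 * t ^ 2)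
        MeasureTheory.volume (-(h / 2)) (h / 2) :=
      (Continuous.intervalIntegrable (by fun_prop) _ _)
    have i3 : IntervalIntegrable (fun t : ℝ => iteratedDeriv 3 f 0 / 6 * t ^ 3)
        MeasureTheory.volume (-(h / 2)) (h / 2) :=
      (Continuous.intervalIntegrable (by fun_prop) _ _)
    rw [hTdef]
    rw [intervalIntegral.integral_add ((i0.add i1).add i2) i3,
      intervalIntegral.integral_add (i0.add i1) i2,
      intervalIntegral.integral_add i0 i1,
      intervalIntegral.integral_const,
      intervalIntegral.integral_const_mul, intervalIntegral.integral_const_mul,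
      intervalIntegral.integral_const_mul, integral_id, integral_pow, integral_pow]
    simp only [smul_eq_mul]
    ring
  have hsplit : (∫ t in (-(h / 2))..(h / 2), f t) - f 0 * h
      - iteratedDeriv 2 f 0 * h ^ 3 / 24
      = ∫ t in (-(h / 2))..(h / 2), (f t - T t) := by
    rw [intervalIntegral.integral_sub hfi hTi, hTint]; ring
  rw [hsplit]
  have hgi : IntervalIntegrable (fun t : ℝ => M / 24 * t ^ 4)
      MeasureTheory.volume (-(h / 2)) (h / 2) :=
    (Continuous.intervalIntegrable (by fun_prop) _ _)
  have hbd : ‖∫ t in (-(h / 2))..(h / 2), (f t - T t)‖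
      ≤ |∫ t in (-(h / 2))..(h / 2), M / 24 * t ^ 4| := by
    apply intervalIntegral.norm_integral_le_abs_of_norm_le _ hgi
    rw [MeasureTheory.ae_restrict_iff' measurableSet_uIoc]
    refine MeasureTheory.ae_of_all _ (fun t ht => ?_)
    rw [Set.uIoc_of_le hab] at ht
    exact (Real.norm_eq_abs _) ▸ key t ⟨ht.1.le, ht.2⟩
  rw [Real.norm_eq_abs] at hbd
  refine hbd.trans ?_
  rw [intervalIntegral.integral_const_mul, integral_pow]
  have e2 : M / 24 * (((h / 2) ^ (4 + 1) - (-(h / 2)) ^ (4 + 1)) / (((4:ℕ):ℝ) + 1)) = M * h ^ 5 / 1920 := by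
    push_cast
    ring
  rw [e2, abs_of_nonneg (by positivity)]
end
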